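/- Let G be a Hilbert space, T compact Hausdorff, with a unital representation φ ↦ M_φ of C(T) on G having the property of strong convergence to 0 (i.e., for each x ∈ T and each h ∈ G and ε > 0, there is a neighbourhood V' of x such that ‖M_χ h‖ < ε whenever χ ∈ C(T,[0,1]) is supported in V'). If P ∈ L(G) is Fredholm and commutes with all M_φ modulo compact operators, then P is locally invertible at every x ∈ T: there exist a neighbourhood V_x of x and operators Q₁ˣ, Q₂ˣ ∈ L(G) with Q₁ˣ P M_φ = M_φ = M_φ P Q₂ˣ for all φ ∈ C(T) supported in V_x. -/

import Mathlib

open Metric Set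

/-- converse direction of the general Simonenko localization principle:
if the unital representation `φ ↦ M φ` of `C(T)` on the Hilbert space `𝒢` has the property
of strong convergence to `0`, then every Fredholm operator `P` commuting with all `M φ`
modulo compact operators is locally invertible at every point of `T`. -/
theorem fredholm_implies_locally_invertible
    {T : Type*} [TopologicalSpace T] [CompactSpace T] [T2Space T]
    {𝒢 : Type*} [NormedAddCommGroup 𝒢] [InnerProductSpace ℂ 𝒢] [CompleteSpace 𝒢]
    (M : C(T, ℂ) →⋆ₐ[ℂ] (𝒢 →L[ℂ] 𝒢))
    (hstrong : ∀ (x : T) (h : 𝒢) (ε : ℝ), 0 < ε → ∃ V' ∈ nhds x,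
      ∀ χ : C(T, ℂ), (∀ t, (χ t).im = 0 ∧ 0 ≤ (χ t).re ∧ (χ t).re ≤ 1) →
        tsupport ⇑χ ⊆ V' → ‖M χ h‖ < ε)
    (P : 𝒢 →L[ℂ] 𝒢)
    (hfred : ∃ Q : 𝒢 →L[ℂ] 𝒢,
      IsCompactOperator ⇑(P * Q - 1) ∧ IsCompactOperator ⇑(Q * P - 1))
    (hcomm : ∀ φ : C(T, ℂ), IsCompactOperator ⇑(P * M φ - M φ * P)) :
    ∀ x : T, ∃ V ∈ nhds x, ∃ Q₁ Q₂ : 𝒢 →L[ℂ] 𝒢,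
      ∀ φ : C(T, ℂ), tsupport ⇑φ ⊆ V →
        Q₁ * P * M φ = M φ ∧ M φ * P * Q₂ = M φ := by
  obtain ⟨Q, hK₁, hK₂⟩ := hfred
  intro x
  -- `M` is contractive on the functions under consideration
  have hMnorm : ∀ χ : C(T, ℂ), (∀ t, (χ t).im = 0 ∧ 0 ≤ (χ t).re ∧ (χ t).re ≤ 1) →
      ‖M χ‖ ≤ 1 := by
    intro χ hχ
    refine le_trans (NonUnitalStarAlgHom.norm_apply_le M χ) ?_
    rw [ContinuousMap.norm_le _ zero_le_one]
    intro t
    obtain ⟨him, h0, h1⟩ := hχ t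
    have hre : χ t = ((χ t).re : ℂ) := Complex.ext rfl (by simp [him])
    rw [hre, Complex.norm_real, Real.norm_eq_abs, abs_le]
    constructor <;> linarith
  -- key norm estimate: for a compact operator `K`, `‖M χ * K‖` is small for χ with small support
  have key : ∀ K : 𝒢 →L[ℂ] 𝒢, IsCompactOperator ⇑K → ∀ ε : ℝ, 0 < ε →
      ∃ V' ∈ nhds x, ∀ χ : C(T, ℂ), (∀ t, (χ t).im = 0 ∧ 0 ≤ (χ t).re ∧ (χ t).re ≤ 1) →
        tsupport ⇑χ ⊆ V' → ‖M χ * K‖ ≤ ε := by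
    intro K hK ε hε
    obtain ⟨C, hCcomp, hCmem⟩ := hK
    obtain ⟨r, hr, hball⟩ := Metric.mem_nhds_iff.mp hCmem
    set δ := ε * r / 4 with hδ
    have hδpos : 0 < δ := by positivity
    obtain ⟨s, hsfin, hscov⟩ := Metric.totallyBounded_iff.mp hCcomp.totallyBounded δ hδpos
    choose V hVmem hVbound using fun y : 𝒢 => hstrong x y δ hδpos
    refine ⟨⋂ y ∈ s, V y, (Filter.biInter_mem hsfin).mpr fun y _ => hVmem y, ?_⟩
    intro χ hχ hsupp
    have hMχ1 : ‖M χ‖ ≤ 1 := hMnorm χ hχ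
    -- every element of `C` is sent to something small by `M χ`
    have hC : ∀ c ∈ C, ‖M χ c‖ ≤ 2 * δ := by
      intro c hc
      obtain ⟨y, hy, hcy⟩ := Set.mem_iUnion₂.mp (hscov hc)
      have h1 : ‖M χ (c - y)‖ ≤ ‖c - y‖ := by
        calc ‖M χ (c - y)‖ ≤ ‖M χ‖ * ‖c - y‖ := (M χ).le_opNorm _
          _ ≤ 1 * ‖c - y‖ := by
              exact mul_le_mul_of_nonneg_right hMχ1 (norm_nonneg _)
          _ = ‖c - y‖ := one_mul _
      have h2 : ‖c - y‖ < δ := by rwa [← dist_eq_norm, ← Metric.mem_ball]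
      have h3 : ‖M χ y‖ < δ := hVbound y χ hχ
        (hsupp.trans (Set.biInter_subset_of_mem hy))
      have h4 : M χ c = M χ (c - y) + M χ y := by rw [← map_add, sub_add_cancel]
      calc ‖M χ c‖ = ‖M χ (c - y) + M χ y‖ := by rw [h4]
        _ ≤ ‖M χ (c - y)‖ + ‖M χ y‖ := norm_add_le _ _
        _ ≤ 2 * δ := by linarith
    refine ContinuousLinearMap.opNorm_le_bound _ hε.le ?_
    intro h
    by_cases hh : h = 0
    · simp [hh, hε.le]
    have hn : (0:ℝ) < ‖h‖ := norm_pos_iff.mpr hh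
    have hc0 : (0:ℝ) < r / (2 * ‖h‖) := by positivity
    set g : 𝒢 := ((r / (2 * ‖h‖) : ℝ) : ℂ) • h with hg
    have hgnorm : ‖g‖ = r / 2 := by
      rw [hg, norm_smul, Complex.norm_real, Real.norm_eq_abs, abs_of_pos hc0]
      field_simp
    have hgC : K g ∈ C := hball (by
      rw [Metric.mem_ball, dist_zero_right, hgnorm]; linarith)
    have e : M χ (K g) = ((r / (2 * ‖h‖) : ℝ) : ℂ) • M χ (K h) := by
      rw [hg, map_smul, map_smul]
    have e2 : ‖M χ (K g)‖ = (r / (2 * ‖h‖)) * ‖M χ (K h)‖ := by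
      rw [e, norm_smul, Complex.norm_real, Real.norm_eq_abs, abs_of_pos hc0]
    have hX : (r / (2 * ‖h‖)) * ‖M χ (K h)‖ ≤ 2 * δ := e2 ▸ hC (K g) hgC
    have hfinal : ‖M χ (K h)‖ ≤ ε * ‖h‖ := by
      have h5 : ‖M χ (K h)‖ ≤ 2 * δ / (r / (2 * ‖h‖)) :=
        (le_div_iff₀ hc0).mpr (by rw [mul_comm]; exact hX)
      have h6 : 2 * δ / (r / (2 * ‖h‖)) = ε * ‖h‖ := by
        rw [hδ]; field_simp; ring
      rwa [h6] at h5
    simpa using hfinal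
  -- apply the key estimate to the two compact error terms
  obtain ⟨V₁, hV₁, hb₁⟩ := key (P * Q - 1) hK₁ (1/2) (by norm_num)
  obtain ⟨V₂, hV₂, hb₂⟩ := key (Q * P - 1) hK₂ (1/2) (by norm_num)
  obtain ⟨Vo, hVo_sub, hVo_open, hxVo⟩ := mem_nhds_iff.mp (Filter.inter_mem hV₁ hV₂)
  obtain ⟨W, hWmem, hWclosed, hWsub⟩ :=
    exists_mem_nhds_isClosed_subset (hVo_open.mem_nhds hxVo)
  -- Urysohn: a function `ψ` equal to `1` on `W`, supported in `Vo`
  obtain ⟨ψ, hψsupp, hψone, hψrange⟩ :=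
    exists_tsupport_one_of_isOpen_isClosed hVo_open isClosed_closure.isCompact hWclosed hWsub
  set χ : C(T, ℂ) := ⟨fun t => ((ψ t : ℝ) : ℂ),
    Complex.continuous_ofReal.comp ψ.continuous⟩ with hχdef
  have hχcond : ∀ t, (χ t).im = 0 ∧ 0 ≤ (χ t).re ∧ (χ t).re ≤ 1 := by
    intro t
    refine ⟨Complex.ofReal_im _, ?_, ?_⟩ <;>
      simp only [hχdef, ContinuousMap.coe_mk, Complex.ofReal_re]
    · exact (hψrange t).1
    · exact (hψrange t).2
  have hχsupp : tsupport ⇑χ ⊆ Vo := by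
    have hs : Function.support ⇑χ = Function.support ⇑ψ := by
      ext t; simp [hχdef, Function.mem_support]
    calc tsupport ⇑χ = tsupport ⇑ψ := by rw [tsupport, hs, tsupport]
      _ ⊆ Vo := hψsupp
  have hMχ1 : ‖M χ‖ ≤ 1 := hMnorm χ hχcond
  have n₁ : ‖M χ * (P * Q - 1)‖ ≤ 1/2 :=
    hb₁ χ hχcond (hχsupp.trans (hVo_sub.trans Set.inter_subset_left))
  have n₂ : ‖M χ * (Q * P - 1)‖ ≤ 1/2 :=
    hb₂ χ hχcond (hχsupp.trans (hVo_sub.trans Set.inter_subset_right))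
  have ht₁ : ‖M χ * (P * Q - 1) * M χ‖ < 1 :=
    calc ‖M χ * (P * Q - 1) * M χ‖ ≤ ‖M χ * (P * Q - 1)‖ * ‖M χ‖ := norm_mul_le _ _
      _ ≤ (1/2) * 1 := mul_le_mul n₁ hMχ1 (norm_nonneg _) (by norm_num)
      _ < 1 := by norm_num
  have ht₂ : ‖M χ * (Q * P - 1) * M χ‖ < 1 :=
    calc ‖M χ * (Q * P - 1) * M χ‖ ≤ ‖M χ * (Q * P - 1)‖ * ‖M χ‖ := norm_mul_le _ _
      _ ≤ (1/2) * 1 := mul_le_mul n₂ hMχ1 (norm_nonneg _) (by norm_num)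
      _ < 1 := by norm_num
  set u₁ : (𝒢 →L[ℂ] 𝒢)ˣ := Units.oneSub (-(M χ * (P * Q - 1) * M χ))
    (by rwa [norm_neg]) with hu₁def
  set u₂ : (𝒢 →L[ℂ] 𝒢)ˣ := Units.oneSub (-(M χ * (Q * P - 1) * M χ))
    (by rwa [norm_neg]) with hu₂def
  have hu₁val : (u₁ : 𝒢 →L[ℂ] 𝒢) = 1 + M χ * (P * Q - 1) * M χ := by
    rw [hu₁def, Units.val_oneSub, sub_neg_eq_add]
  have hu₂val : (u₂ : 𝒢 →L[ℂ] 𝒢)= 1 + M χ * (Q * P - 1) * M χ := by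
    rw [hu₂def, Units.val_oneSub, sub_neg_eq_add]
  refine ⟨interior W, interior_mem_nhds.mpr hWmem,
    (↑u₂⁻¹ : 𝒢 →L[ℂ] 𝒢) * (M χ * Q), (Q * M χ) * (↑u₁⁻¹ : 𝒢 →L[ℂ] 𝒢), ?_⟩
  intro φ hφ
  have hmul : χ * φ = φ := by
    ext t
    by_cases ht : t ∈ tsupport ⇑φ
    · have h1 : ψ t = 1 := hψone (interior_subset (hφ ht))
      simp [hχdef, h1]
    · have h0 : φ t = 0 := image_eq_zero_of_notMem_tsupport ht
      simp [h0]
  have hMχφ : M χ * M φ = M φ := by rw [← map_mul, hmul]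
  have hMφχ : M φ * M χ = M φ := by rw [← map_mul, mul_comm, hmul]
  constructor
  · -- left local inverse
    have e : M χ * (Q * P - 1) * M φ = (M χ * (Q * P - 1) * M χ) * M φ := by
      rw [mul_assoc (M χ * (Q * P - 1)) (M χ) (M φ), hMχφ]
    calc (↑u₂⁻¹ : 𝒢 →L[ℂ] 𝒢) * (M χ * Q) * P * M φ
        = (↑u₂⁻¹ : 𝒢 →L[ℂ] 𝒢) * (M χ * M φ + M χ * (Q * P - 1) * M φ) := by noncomm_ring
      _ = (↑u₂⁻¹ : 𝒢 →L[ℂ] 𝒢) * ((↑u₂ : 𝒢 →L[ℂ] 𝒢) * M φ) := by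
          rw [hMχφ, e, hu₂val]; noncomm_ring
      _ = M φ := by rw [← mul_assoc, u₂.inv_mul, one_mul]
  · -- right local inverse
    have e : M φ * (P * Q - 1) * M χ = M φ * (M χ * (P * Q - 1) * M χ) := by
      rw [show M φ * (M χ * (P * Q - 1) * M χ) = (M φ * M χ) * ((P * Q - 1) * M χ) by
        noncomm_ring, hMφχ, mul_assoc]
    calc M φ * P * ((Q * M χ) * (↑u₁⁻¹ : 𝒢 →L[ℂ] 𝒢))
        = (M φ * M χ + M φ * (P * Q - 1) * M χ) * (↑u₁⁻¹ : 𝒢 →L[ℂ] 𝒢) := by noncomm_ring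
      _ = (M φ * (↑u₁ : 𝒢 →L[ℂ] 𝒢)) * (↑u₁⁻¹ : 𝒢 →L[ℂ] 𝒢) := by
          rw [hMφχ, e, hu₁val]; noncomm_ring
      _ = M φ := by rw [mul_assoc, u₁.mul_inv, mul_one]
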